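/- arXiv:1511.07621 — 3 statements merged into one kernel-verified Lean document; each statement's English description precedes it below -/
import Mathlib

section
/- Let r ≥ 2, let ρ_1, …, ρ_r be distinct real numbers, c a real number, and let F : Fin r → Fin r → Fin r → ℝ be symmetric in all three indices with F i j k = 0 whenever two of the eigenvalue indices coincide. If for all i ≠ j one has c − ρ_i·ρ_j = Σ_{k ≠ i, k ≠ j} (F i j k)² / ((ρ_i − ρ_k)(ρ_j − ρ_k)), then for each fixed i: Σ_{j ≠ i} (c − ρ_i·ρ_j)/(ρ_i − ρ_j) = 0. -/
theorem stmt_3 (r : ℕ) (hr : 2 ≤ r) (ρ : Fin r → ℝ) (hρ : Function.Injective ρ)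
    (c : ℝ) (F : Fin r → Fin r → Fin r → ℝ)
    (hsym1 : ∀ i j k, F i j k = F j i k)
    (hsym2 : ∀ i j k, F i j k = F i k j)
    (hvan : ∀ i j k, i = j ∨ j = k ∨ i = k → F i j k = 0)
    (heq : ∀ i j, i ≠ j →
      c - ρ i * ρ j =
        ∑ k ∈ Finset.univ.filter (fun k => k ≠ i ∧ k ≠ j),
          (F i j k) ^ 2 / ((ρ i - ρ k) * (ρ j - ρ k))) :
    ∀ i, ∑ j ∈ Finset.univ.filter (fun j => j ≠ i),
      (c - ρ i * ρ j) / (ρ i - ρ j) = 0 := by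
  intro i
  set g : Fin r → Fin r → ℝ := fun j k =>
    F i j k ^ 2 / ((ρ i - ρ k) * (ρ j - ρ k) * (ρ i - ρ j)) with hg
  set h : Fin r → Fin r → ℝ := fun j k =>
    if j ≠ i ∧ k ≠ i ∧ k ≠ j then g j k else 0 with hh
  have hanti : ∀ j k, h j k = - h k j := by
    intro j k
    by_cases hc : j ≠ i ∧ k ≠ i ∧ k ≠ j
    · have hc' : k ≠ i ∧ j ≠ i ∧ j ≠ k := ⟨hc.2.1, hc.1, Ne.symm hc.2.2⟩
      simp only [hh, hg]
      rw [if_pos hc, if_pos hc', hsym2 i k j]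
      have hd : (ρ i - ρ j) * (ρ k - ρ j) * (ρ i - ρ k)
          = -((ρ i - ρ k) * (ρ j - ρ k) * (ρ i - ρ j)) := by ring
      rw [hd, div_neg, neg_neg]
    · have hc' : ¬ (k ≠ i ∧ j ≠ i ∧ j ≠ k) := by
        intro hk; exact hc ⟨hk.2.1, hk.1, Ne.symm hk.2.2⟩
      simp [hh, hc, hc']
  have hstep : ∑ j ∈ Finset.univ.filter (fun j => j ≠ i),
      (c - ρ i * ρ j) / (ρ i - ρ j)
      = ∑ j : Fin r, ∑ k : Fin r, h j k := by
    rw [Finset.sum_filter]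
    refine Finset.sum_congr rfl fun j _ => ?_
    by_cases hj : j ≠ i
    · rw [if_pos hj, heq i j (Ne.symm hj), Finset.sum_div]
      rw [Finset.sum_filter]
      refine Finset.sum_congr rfl fun k _ => ?_
      by_cases hk : k ≠ i ∧ k ≠ j
      · rw [if_pos hk]
        simp only [hh, hj, hk, and_self, if_pos, ne_eq, not_false_iff, true_and, hg]
        rw [div_div]
      · rw [if_neg hk]
        have : ¬ (j ≠ i ∧ k ≠ i ∧ k ≠ j) := fun hx => hk ⟨hx.2.1, hx.2.2⟩
        simp [hh, this]
    · rw [if_neg hj]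
      have : ∀ k, h j k = 0 := by
        intro k
        have : ¬ (j ≠ i ∧ k ≠ i ∧ k ≠ j) := fun hx => hj hx.1
        simp [hh, this]
      simp [this]
  rw [hstep]
  have hswap : ∑ j : Fin r, ∑ k : Fin r, h j k
      = - ∑ j : Fin r, ∑ k : Fin r, h j k := by
    calc (∑ j : Fin r, ∑ k : Fin r, h j k)
        = ∑ j : Fin r, ∑ k : Fin r, -(h k j) :=
          Finset.sum_congr rfl fun j _ => Finset.sum_congr rfl fun k _ => hanti j k
      _ = - ∑ j : Fin r, ∑ k : Fin r, h k j := by simp [Finset.sum_neg_distrib]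
      _ = - ∑ j : Fin r, ∑ k : Fin r, h j k := by rw [Finset.sum_comm]
  linarith
end

section
/- Let r ≥ 3 and let ρ_1 < ρ_2 < ⋯ < ρ_r be real numbers with ρ_1 < 0, and let c be a real number with c − ρ_m·ρ_{m+1} ≥ 0 for all 1 ≤ m ≤ r−1. Then Σ_{j=2}^{r} (c − ρ_1·ρ_j)/(ρ_1 − ρ_j) < 0. -/
theorem stmt_4 (r : ℕ) (hr : 3 ≤ r) (ρ : Fin r → ℝ) (hmono : StrictMono ρ)
    (hneg : ρ ⟨0, by omega⟩ < 0) (c : ℝ)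
    (hc : ∀ m : Fin r, ∀ h : m.val + 1 < r, 0 ≤ c - ρ m * ρ ⟨m.val + 1, h⟩) :
    ∑ j ∈ Finset.univ.filter (fun j => j ≠ (⟨0, by omega⟩ : Fin r)),
      (c - ρ ⟨0, by omega⟩ * ρ j) / (ρ ⟨0, by omega⟩ - ρ j) < 0 := by
  set i0 : Fin r := ⟨0, by omega⟩
  set i1 : Fin r := ⟨1, by omega⟩
  set i2 : Fin r := ⟨2, by omega⟩
  have h01 : 0 ≤ c - ρ i0 * ρ i1 := hc i0 (by simp only [i0]; omega)
  have key : ∀ j ∈ Finset.univ.filter (fun j => j ≠ i0),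
      (c - ρ i0 * ρ j) / (ρ i0 - ρ j) ≤ 0 := by
    intro j hj
    simp only [Finset.mem_filter] at hj
    have hj1 : (1 : ℕ) ≤ j.val := by
      rcases Nat.eq_zero_or_pos j.val with h | h
      · exact absurd (Fin.ext h) hj.2
      · exact h
    have hlt : ρ i0 < ρ j := hmono (by simp [i0, Fin.lt_def]; omega)
    have hnum : 0 ≤ c - ρ i0 * ρ j := by
      have : ρ i0 * ρ j ≤ ρ i0 * ρ i1 := by
        have : ρ i1 ≤ ρ j := hmono.le_iff_le.mpr (by simp [i1, Fin.le_def]; omega)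
        nlinarith
      linarith
    exact div_nonpos_of_nonneg_of_nonpos hnum (by linarith)
  have hstrict : (c - ρ i0 * ρ i2) / (ρ i0 - ρ i2) < 0 := by
    have h12 : ρ i1 < ρ i2 := hmono (by simp [i1, i2, Fin.lt_def])
    have h02 : ρ i0 < ρ i2 := hmono (by simp [i0, i2, Fin.lt_def])
    have : ρ i0 * ρ i2 < ρ i0 * ρ i1 := by nlinarith
    exact div_neg_of_pos_of_neg (by linarith) (by linarith)
  have hmem : i2 ∈ Finset.univ.filter (fun j => j ≠ i0) := by
    simp [i2, i0, Fin.ext_iff]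
  calc ∑ j ∈ Finset.univ.filter (fun j => j ≠ i0),
        (c - ρ i0 * ρ j) / (ρ i0 - ρ j)
      < ∑ _j ∈ Finset.univ.filter (fun j => j ≠ i0), (0 : ℝ) :=
        Finset.sum_lt_sum key ⟨i2, hmem, hstrict⟩
    _ = 0 := by simp
end

section
/- There do not exist: an integer r ≥ 3, distinct real numbers ρ_1, …, ρ_r, a real number c, and a function F : Fin r → Fin r → Fin r → ℝ symmetric in all three indices, such that for all i ≠ j, c − ρ_i·ρ_j = Σ_{k ≠ i, k ≠ j} (F i j k)² / ((ρ_i − ρ_k)(ρ_j − ρ_k)). -/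
open Finset

private lemma core_aux (r : ℕ) (hr : 3 ≤ r) (ρ : Fin r → ℝ) (hinj : Function.Injective ρ)
    (c : ℝ) (F : Fin r → Fin r → Fin r → ℝ)
    (h2 : ∀ i j k, F i j k = F i k j)
    (heq : ∀ i j, i ≠ j → c - ρ i * ρ j =
      ∑ k ∈ Finset.univ.filter (fun k => k ≠ i ∧ k ≠ j),
        (F i j k) ^ 2 / ((ρ i - ρ k) * (ρ j - ρ k)))
    (i0 : Fin r) (hmax : ∀ j, ρ j ≤ ρ i0) (hpos : 0 < ρ i0) : False := by
  classical
  set s : Finset (Fin r) := Finset.univ.erase i0 with hs_def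
  have hscard : 1 < s.card := by
    rw [hs_def, Finset.card_erase_of_mem (Finset.mem_univ i0), Finset.card_univ,
      Fintype.card_fin]
    omega
  have hsne : s.Nonempty := Finset.card_pos.mp (by omega)
  -- strict inequality against the max
  have hlt : ∀ j, j ≠ i0 → ρ j < ρ i0 := fun j hj =>
    lt_of_le_of_ne (hmax j) (fun h => hj (hinj h))
  -- second largest
  obtain ⟨i1, hi1s, hi1max⟩ := Finset.exists_max_image s ρ hsne
  have hi1ne : i1 ≠ i0 := (Finset.mem_erase.mp hi1s).1
  have hi1lt : ρ i1 < ρ i0 := hlt i1 hi1ne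
  -- Step B': c - ρ i0 * ρ i1 ≥ 0
  have hc1 : 0 ≤ c - ρ i0 * ρ i1 := by
    rw [heq i0 i1 (fun h => hi1ne h.symm)]
    apply Finset.sum_nonneg
    intro k hk
    obtain ⟨hk0, hk1⟩ := (Finset.mem_filter.mp hk).2
    have hks : k ∈ s := Finset.mem_erase.mpr ⟨hk0, Finset.mem_univ k⟩
    have hklt1 : ρ k < ρ i1 := lt_of_le_of_ne (hi1max k hks) (fun h => hk1 (hinj h))
    have hklt0 : ρ k < ρ i0 := hlt k hk0
    exact div_nonneg (sq_nonneg _) (le_of_lt (mul_pos (by linarith) (by linarith)))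
  -- Step B: each Cartan term is nonnegative
  have hterm_nonneg : ∀ j ∈ s, 0 ≤ (c - ρ i0 * ρ j) / (ρ i0 - ρ j) := by
    intro j hjs
    have hjne : j ≠ i0 := (Finset.mem_erase.mp hjs).1
    have hjle : ρ j ≤ ρ i1 := hi1max j hjs
    have hnum : 0 ≤ c - ρ i0 * ρ j := by nlinarith
    have hden : 0 < ρ i0 - ρ j := by linarith [hlt j hjne]
    exact div_nonneg hnum (le_of_lt hden)
  -- the inner index sets
  set t : Fin r → Finset (Fin r) := fun j => Finset.univ.filter (fun k => k ≠ i0 ∧ k ≠ j)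
    with ht_def
  set g : Fin r → Fin r → ℝ := fun j k =>
    (F i0 j k) ^ 2 / ((ρ i0 - ρ k) * (ρ j - ρ k) * (ρ i0 - ρ j)) with hg_def
  -- Step A: Cartan identity
  have hS : ∑ j ∈ s, (c - ρ i0 * ρ j) / (ρ i0 - ρ j) = ∑ j ∈ s, ∑ k ∈ t j, g j k := by
    apply Finset.sum_congr rfl
    intro j hjs
    have hjne : j ≠ i0 := (Finset.mem_erase.mp hjs).1
    rw [heq i0 j (fun h => hjne h.symm), Finset.sum_div]
    apply Finset.sum_congr rfl
    intro k _
    rw [hg_def, div_div]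
  have hiff : ∀ x y : Fin r, x ∈ s ∧ y ∈ t x ↔ x ∈ t y ∧ y ∈ s := by
    intro x y
    simp only [hs_def, ht_def, Finset.mem_erase, Finset.mem_filter, Finset.mem_univ,
      true_and, and_true]
    constructor
    · rintro ⟨hx, hy, hyx⟩; exact ⟨⟨hx, fun h => hyx h.symm⟩, hy⟩
    · rintro ⟨⟨hx, hxy⟩, hy⟩; exact ⟨hx, hy, fun h => hxy h.symm⟩
  have hswap : ∑ j ∈ s, ∑ k ∈ t j, g j k = ∑ k ∈ s, ∑ j ∈ t k, g j k :=
    Finset.sum_comm' hiff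
  have hanti : ∀ k ∈ s, ∀ j ∈ t k, g j k = -g k j := by
    intro k hks j hjt
    have hkne : k ≠ i0 := (Finset.mem_erase.mp hks).1
    obtain ⟨hj0, hjk⟩ := (Finset.mem_filter.mp hjt).2
    have hF : F i0 k j = F i0 j k := (h2 i0 j k).symm
    simp only [hg_def, hF]
    rw [show (ρ i0 - ρ j) * (ρ k - ρ j) * (ρ i0 - ρ k)
        = -((ρ i0 - ρ k) * (ρ j - ρ k) * (ρ i0 - ρ j)) from by ring, div_neg, neg_neg]
  have hD0 : ∑ j ∈ s, ∑ k ∈ t j, g j k = 0 := by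
    have h1 : ∑ k ∈ s, ∑ j ∈ t k, g j k = -∑ k ∈ s, ∑ j ∈ t k, g k j := by
      rw [← Finset.sum_neg_distrib]
      apply Finset.sum_congr rfl
      intro k hks
      rw [← Finset.sum_neg_distrib]
      exact Finset.sum_congr rfl (fun j hjt => hanti k hks j hjt)
    have h2' : ∑ k ∈ s, ∑ j ∈ t k, g k j = ∑ j ∈ s, ∑ k ∈ t j, g j k := rfl
    rw [h2'] at h1
    rw [hswap] at *
    linarith [h1, hswap]
  have hT0 : ∑ j ∈ s, (c - ρ i0 * ρ j) / (ρ i0 - ρ j) = 0 := by rw [hS]; exact hD0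
  -- each term is zero
  have hall := (Finset.sum_eq_zero_iff_of_nonneg hterm_nonneg).mp hT0
  have hc_eq : ∀ j ∈ s, c = ρ i0 * ρ j := by
    intro j hjs
    have hjne : j ≠ i0 := (Finset.mem_erase.mp hjs).1
    have hd : ρ i0 - ρ j ≠ 0 := sub_ne_zero.mpr (fun h => hjne (hinj h).symm)
    have := hall j hjs
    rcases div_eq_zero_iff.mp this with h | h
    · linarith [sub_eq_zero.mp (by linarith : c - ρ i0 * ρ j = 0)]
    · exact absurd h hd
  obtain ⟨a, ha, b, hb, hab⟩ := Finset.one_lt_card.mp hscard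
  have : ρ a = ρ b := mul_left_cancel₀ (ne_of_gt hpos)
    ((hc_eq a ha).symm.trans (hc_eq b hb))
  exact hab (hinj this)

theorem stmt_6 :
    ¬ ∃ (r : ℕ) (_ : 3 ≤ r) (ρ : Fin r → ℝ) (_ : Function.Injective ρ)
      (c : ℝ) (F : Fin r → Fin r → Fin r → ℝ),
      (∀ i j k, F i j k = F j i k) ∧ (∀ i j k, F i j k = F i k j) ∧
      (∀ i j, i ≠ j →
        c - ρ i * ρ j =
          ∑ k ∈ Finset.univ.filter (fun k => k ≠ i ∧ k ≠ j),
            (F i j k) ^ 2 / ((ρ i - ρ k) * (ρ j - ρ k))) := by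
  rintro ⟨r, hr, ρ, hinj, c, F, h1, h2, heq⟩
  haveI : Nonempty (Fin r) := ⟨⟨0, by omega⟩⟩
  obtain ⟨i0, hi0⟩ := Finite.exists_max ρ
  by_cases hpos : 0 < ρ i0
  · exact core_aux r hr ρ hinj c F h2 heq i0 hi0 hpos
  · push_neg at hpos
    obtain ⟨m, hm⟩ := Finite.exists_min ρ
    have hinj' : Function.Injective (fun i => -ρ i) := fun a b h => hinj (by
      have : -ρ a = -ρ b := h
      linarith)
    have heq' : ∀ i j, i ≠ j → c - (-ρ i) * (-ρ j) =
        ∑ k ∈ Finset.univ.filter (fun k => k ≠ i ∧ k ≠ j),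
          (F i j k) ^ 2 / (((-ρ i) - (-ρ k)) * ((-ρ j) - (-ρ k))) := by
      intro i j hij
      have h0 : c - (-ρ i) * (-ρ j) = c - ρ i * ρ j := by ring
      rw [h0, heq i j hij]
      apply Finset.sum_congr rfl
      intro k _
      rw [show ((-ρ i) - (-ρ k)) * ((-ρ j) - (-ρ k)) = (ρ i - ρ k) * (ρ j - ρ k) from by ring]
    have hmax' : ∀ j, (fun i => -ρ i) j ≤ (fun i => -ρ i) m := fun j => by
      simp only; linarith [hm j]
    have hposm : 0 < (fun i => -ρ i) m := by
      simp only
      -- find an index distinct from i0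
      have h01 : (⟨0, by omega⟩ : Fin r) ≠ (⟨1, by omega⟩ : Fin r) := by
        intro h; simpa using congrArg Fin.val h
      obtain ⟨a, hane⟩ : ∃ a : Fin r, a ≠ i0 := by
        by_cases h : (⟨0, by omega⟩ : Fin r) = i0
        · exact ⟨⟨1, by omega⟩, by rw [← h]; exact h01.symm⟩
        · exact ⟨⟨0, by omega⟩, h⟩
      have : ρ a < ρ i0 := lt_of_le_of_ne (hi0 a) (fun h => hane (hinj h))
      have := hm a
      linarith
    exact core_aux r hr (fun i => -ρ i) hinj' c F h2 heq' m hmax' hposm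
end
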